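/- arXiv:1501.02385 — 3 statements merged into one kernel-verified Lean document; each statement's English description precedes it below -/
import Mathlib

section
/- Let S = B_r(0) ⊂ ℝ² be the open disc of radius r. For every h ∈ ℝ² with 0 < |h|, and every line orthogonal to h at distance y from the center, the one-dimensional measure of the section of (h + S) Δ S along the direction h/|h| is at most 2|h|. Hence the disc satisfies hypothesis (H2) with η(h) = h/|h| and K_S = 2. -/
open MeasureTheory

/-- The section along the unit direction `η` at base point `y` of the symmetric difference
of the disc `B_r(0) ⊂ ℝ²` with its translate by `h` has 1-D measure at most `2‖h‖`,
where `η = h/‖h‖` and `y ⊥ h`.  Hence the disc satisfies (H2) with `K_S = 2`. -/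
theorem disc_section_symmDiff_le {r : ℝ} (hr : 0 < r)
    (h : EuclideanSpace ℝ (Fin 2)) (hh : h ≠ 0)
    (y : EuclideanSpace ℝ (Fin 2)) (hy : inner ℝ y h = (0 : ℝ)) :
    volume {t : ℝ |
        y + t • (‖h‖⁻¹ • h) ∈
          symmDiff ((fun s => h + s) '' Metric.ball (0 : EuclideanSpace ℝ (Fin 2)) r)
            (Metric.ball (0 : EuclideanSpace ℝ (Fin 2)) r)}
      ≤ ENNReal.ofReal (2 * ‖h‖) := by
  set η : EuclideanSpace ℝ (Fin 2) := ‖h‖⁻¹ • h with hηdef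
  have hc : (0:ℝ) < ‖h‖ := norm_pos_iff.mpr hh
  set c : ℝ := ‖h‖ with hcdef
  have hη1 : ‖η‖ = 1 := by
    rw [hηdef, norm_smul, norm_inv, norm_norm, inv_mul_cancel₀ hc.ne']
  have hyη : inner ℝ y η = (0:ℝ) := by
    rw [hηdef, real_inner_smul_right, hy, mul_zero]
  have hhc : h = c • η := by
    rw [hηdef, smul_smul, mul_inv_cancel₀ hc.ne', one_smul]
  -- P s : membership condition
  set P : ℝ → Prop := fun s => ‖y‖^2 + s^2 < r^2 with hPdef
  have hnorm : ∀ s : ℝ, ‖y + s • η‖^2 = ‖y‖^2 + s^2 := by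
    intro s
    rw [@norm_add_sq_real, real_inner_smul_right, hyη, mul_zero, norm_smul, hη1,
      mul_one, mul_zero, add_zero, Real.norm_eq_abs, sq_abs]
  have hball : ∀ s : ℝ, y + s • η ∈ Metric.ball (0 : EuclideanSpace ℝ (Fin 2)) r ↔ P s := by
    intro s
    rw [mem_ball_zero_iff, hPdef]
    constructor
    · intro hlt
      have := hnorm s
      nlinarith [norm_nonneg (y + s • η)]
    · intro hlt
      have hn := hnorm s
      nlinarith [norm_nonneg (y + s • η)]
  have himg : ∀ t : ℝ, (y + t • η ∈
      (fun s => h + s) '' Metric.ball (0 : EuclideanSpace ℝ (Fin 2)) r) ↔ P (t - c) := by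
    intro t
    rw [← hball (t - c)]
    constructor
    · rintro ⟨s, hs, heq⟩
      have heq' := heq
      rw [hhc] at heq'
      have hs2 : s = y + t • η - c • η := by rw [← heq']; module
      have : y + (t - c) • η = s := by rw [hs2, sub_smul]; abel
      rwa [this]
    · intro hs
      exact ⟨y + (t - c) • η, hs, by rw [hhc]; module⟩
  set a : ℝ := Real.sqrt (r^2 - ‖y‖^2) with hadef
  have ha0 : 0 ≤ a := Real.sqrt_nonneg _
  have hiff : ∀ s : ℝ, P s ↔ (-a < s ∧ s < a) := by
    intro s
    rcases le_or_gt (r^2 - ‖y‖^2) 0 with hb | hb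
    · constructor
      · intro hp; exfalso; rw [hPdef] at hp; nlinarith [sq_nonneg s]
      · rintro ⟨h1, h2⟩
        exfalso
        have : a = 0 := by
          rw [hadef, Real.sqrt_eq_zero']; exact hb
        rw [this] at h1 h2; linarith
    · have haq : a^2 = r^2 - ‖y‖^2 := Real.sq_sqrt hb.le
      rw [hPdef]
      constructor
      · intro hp
        constructor <;> nlinarith
      · rintro ⟨h1, h2⟩; nlinarith
  have hsub : {t : ℝ |
        y + t • (‖h‖⁻¹ • h) ∈
          symmDiff ((fun s => h + s) '' Metric.ball (0 : EuclideanSpace ℝ (Fin 2)) r)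
            (Metric.ball (0 : EuclideanSpace ℝ (Fin 2)) r)} ⊆
      Set.Ioc (-a) (c - a) ∪ Set.Ico a (a + c) := by
    intro t ht
    simp only [Set.mem_setOf_eq, Set.mem_symmDiff] at ht
    rw [← hηdef, himg t, hball t, hiff t, hiff (t - c)] at ht
    rcases ht with ⟨⟨h1, h2⟩, h3⟩ | ⟨⟨h1, h2⟩, h3⟩
    · -- translated, not original : t ∈ [a, a + c)
      right
      rw [not_and_or, not_lt, not_lt] at h3
      rcases h3 with h3 | h3
      · exfalso; linarith
      · exact ⟨h3, by linarith⟩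
    · -- original, not translated : t ∈ (-a, c - a]
      left
      rw [not_and_or, not_lt, not_lt] at h3
      rcases h3 with h3 | h3
      · exact ⟨h1, by linarith⟩
      · exfalso; linarith
  calc volume {t : ℝ |
        y + t • (‖h‖⁻¹ • h) ∈
          symmDiff ((fun s => h + s) '' Metric.ball (0 : EuclideanSpace ℝ (Fin 2)) r)
            (Metric.ball (0 : EuclideanSpace ℝ (Fin 2)) r)}
      ≤ volume (Set.Ioc (-a) (c - a) ∪ Set.Ico a (a + c)) := measure_mono hsub
    _ ≤ volume (Set.Ioc (-a) (c - a)) + volume (Set.Ico a (a + c)) := measure_union_le _ _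
    _ = ENNReal.ofReal (c - a - (-a)) + ENNReal.ofReal (a + c - a) := by
        rw [Real.volume_Ioc, Real.volume_Ico]
    _ ≤ ENNReal.ofReal (2 * ‖h‖) := by
        rw [← ENNReal.ofReal_add (by linarith) (by linarith)]
        apply ENNReal.ofReal_le_ofReal
        rw [hcdef]; ring_nf; rfl
end

section
/- Let S = (0,a) × (0,b) ⊂ ℝ² be an open axis-aligned rectangle. For every h ∈ ℝ² with h ≠ 0, every section of the symmetric difference (h + S) Δ S along the direction η = h/|h| has one-dimensional measure at most 2|h|. -/
open MeasureTheory

lemma vol_le_of_diam {A : Set ℝ} {r : ℝ} (hr : 0 ≤ r)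
    (hA : ∀ x ∈ A, ∀ y ∈ A, x - y ≤ r) : volume A ≤ ENNReal.ofReal r := by
  rcases A.eq_empty_or_nonempty with hA0 | ⟨p, hp⟩
  · simp [hA0]
  · have hbdd : BddBelow A := ⟨p - r, fun x hx => by have := hA p hp x hx; linarith⟩
    have hsub : A ⊆ Set.Icc (sInf A) (sInf A + r) := by
      intro x hx
      refine ⟨csInf_le hbdd hx, ?_⟩
      have : x - r ≤ sInf A := le_csInf ⟨p, hp⟩ (fun z hz => by have := hA x hx z hz; linarith)
      linarith
    calc volume A ≤ volume (Set.Icc (sInf A) (sInf A + r)) := measure_mono hsub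
      _ = ENNReal.ofReal r := by rw [Real.volume_Icc, add_sub_cancel_left]

/-- For the open rectangle `S = (0,a) × (0,b) ⊂ ℝ²` and any `h ≠ 0`, every section of the
symmetric difference `(h + S) Δ S` along the direction `η = h/‖h‖` has one-dimensional
measure at most `2‖h‖`. -/
theorem rectangle_section_symmDiff_le (a b : ℝ) (ha : 0 < a) (hb : 0 < b)
    (h : EuclideanSpace ℝ (Fin 2)) (hh : h ≠ 0)
    (y : EuclideanSpace ℝ (Fin 2)) (hy : inner ℝ y h = (0 : ℝ)) :
    volume {t : ℝ |
        y + t • (‖h‖⁻¹ • h) ∈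
          symmDiff ((fun s => h + s) '' {x : EuclideanSpace ℝ (Fin 2) |
              x 0 ∈ Set.Ioo 0 a ∧ x 1 ∈ Set.Ioo 0 b})
            {x : EuclideanSpace ℝ (Fin 2) | x 0 ∈ Set.Ioo 0 a ∧ x 1 ∈ Set.Ioo 0 b}}
      ≤ ENNReal.ofReal (2 * ‖h‖) := by
  set η : EuclideanSpace ℝ (Fin 2) := ‖h‖⁻¹ • h with hηdef
  set r : ℝ := ‖h‖ with hrdef
  have hr : 0 < r := norm_pos_iff.mpr hh
  have hrη : r • η = h := by
    rw [hηdef, smul_smul, mul_inv_cancel₀ (ne_of_gt hr), one_smul]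
  set S : Set (EuclideanSpace ℝ (Fin 2)) :=
    {x | x 0 ∈ Set.Ioo 0 a ∧ x 1 ∈ Set.Ioo 0 b} with hSdef
  set I : Set ℝ := {t | y + t • η ∈ S} with hIdef
  -- convexity of S
  have hSconv : Convex ℝ S := by
    intro u hu v hv p q hp hq hpq
    constructor
    · have := (convex_Ioo (0:ℝ) a) hu.1 hv.1 hp hq hpq
      simpa [PiLp.add_apply, PiLp.smul_apply, smul_eq_mul] using this
    · have := (convex_Ioo (0:ℝ) b) hu.2 hv.2 hp hq hpq
      simpa [PiLp.add_apply, PiLp.smul_apply, smul_eq_mul] using this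
  have hIconv : Convex ℝ I := by
    intro t₁ ht₁ t₂ ht₂ p q hp hq hpq
    have hq' : q = 1 - p := by linarith
    subst hq'
    have key : y + (p • t₁ + (1 - p) • t₂) • η
        = p • (y + t₁ • η) + (1 - p) • (y + t₂ • η) := by
      simp only [smul_eq_mul]
      module
    show y + (p • t₁ + (1 - p) • t₂) • η ∈ S
    rw [key]
    exact hSconv ht₁ ht₂ hp hq hpq
  have hOrd : ∀ t₁ ∈ I, ∀ t₂ ∈ I, ∀ t, t₁ ≤ t → t ≤ t₂ → t ∈ I := by
    intro t₁ ht₁ t₂ ht₂ t hle1 hle2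
    exact hIconv.ordConnected.out ht₁ ht₂ ⟨hle1, hle2⟩
  -- membership in the translated rectangle
  have hmem : ∀ t : ℝ, (y + t • η ∈ (fun s => h + s) '' S) ↔ (t - r ∈ I) := by
    intro t
    constructor
    · rintro ⟨x, hx, hxe⟩
      have h1 : h + x = y + t • η := hxe
      have hxe' : y + (t - r) • η = x := by
        rw [sub_smul, hrη]
        have h2 : x = y + t • η - h := by rw [← h1]; abel
        rw [h2]; abel
      show y + (t - r) • η ∈ S
      rw [hxe']; exact hx
    · intro hx
      exact ⟨y + (t - r) • η, hx, by rw [sub_smul, hrη]; abel⟩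
  set A : Set ℝ := {t | t - r ∈ I ∧ t ∉ I} with hAdef
  set B : Set ℝ := {t | t ∈ I ∧ t - r ∉ I} with hBdef
  have hsubset : {t : ℝ | y + t • η ∈ symmDiff ((fun s => h + s) '' S) S} ⊆ A ∪ B := by
    intro t ht
    rw [Set.mem_setOf_eq, Set.mem_symmDiff] at ht
    rcases ht with ⟨h1, h2⟩ | ⟨h1, h2⟩
    · exact Or.inl ⟨(hmem t).1 h1, h2⟩
    · exact Or.inr ⟨h1, fun hc => h2 ((hmem t).2 hc)⟩
  have hAvol : volume A ≤ ENNReal.ofReal r := by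
    apply vol_le_of_diam hr.le
    intro x hx z hz
    by_contra hcon
    push_neg at hcon
    exact hz.2 (hOrd (z - r) hz.1 (x - r) hx.1 z (by linarith) (by linarith))
  have hBvol : volume B ≤ ENNReal.ofReal r := by
    apply vol_le_of_diam hr.le
    intro x hx z hz
    by_contra hcon
    push_neg at hcon
    exact hx.2 (hOrd z hz.1 x hx.1 (x - r) (by linarith) (by linarith))
  calc volume {t : ℝ | y + t • η ∈ symmDiff ((fun s => h + s) '' S) S}
      ≤ volume (A ∪ B) := measure_mono hsubset
    _ ≤ volume A + volume B := measure_union_le A B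
    _ ≤ ENNReal.ofReal r + ENNReal.ofReal r := add_le_add hAvol hBvol
    _ = ENNReal.ofReal (2 * r) := by
        rw [← ENNReal.ofReal_add hr.le hr.le]; ring_nf
end

section
/- The 2-D rotational force f_{rot,2d} defined with the rotation matrix A = [[0,1],[−1,0]] satisfies, for every t, the pointwise bound |f_{rot,2d}(t,x)| ≤ 2 (Σ_{i=2}^{N−1} |v_{i−1}(t)|) · max_{i=2,…,N−1} (‖z_i − z_{i−1}‖_{C} + ‖z_i − z_{i−1}‖²_{C} / (2r)), provided |z_i(t) − z_j(t)| > 2r for i ≠ j. -/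
open MeasureTheory

/-- Pointwise bound for the 2-D rotational force: if all pairwise distances
`|z_i(t) − z_j(t)|` exceed `2r`, then
`|f_{rot,2d}(t,x)| ≤ 2 (Σ |v_{i-1}(t)|) · maxᵢ(‖z_i − z_{i-1}‖ + ‖z_i − z_{i-1}‖²/(2r))`,
the max being expressed via any bound `M` on the bracketed quantities. -/
theorem rot_force_2d_pointwise_bound (T r : ℝ) (hT : 0 < T) (hr : 0 < r)
    (N : ℕ) (hN : 3 ≤ N)
    (A : EuclideanSpace ℝ (Fin 2) → EuclideanSpace ℝ (Fin 2))
    (hA : ∀ x, A x = ![x 1, -x 0])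
    (v : ℕ → ℝ → ℝ) (z : ℕ → ℝ → EuclideanSpace ℝ (Fin 2))
    (S : ℕ → ℝ → Set (EuclideanSpace ℝ (Fin 2)))
    (hfar : ∀ t ∈ Set.Icc (0 : ℝ) T, ∀ i ∈ Finset.Icc 1 N, ∀ j ∈ Finset.Icc 1 N,
      i ≠ j → ‖z i t - z j t‖ > 2 * r)
    (M : ℝ)
    (hM : ∀ i ∈ Finset.Icc 2 (N - 1), ∀ t ∈ Set.Icc (0 : ℝ) T,
      ‖z i t - z (i - 1) t‖ + ‖z i t - z (i - 1) t‖ ^ 2 / (2 * r) ≤ M)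
    (f : ℝ → EuclideanSpace ℝ (Fin 2) → EuclideanSpace ℝ (Fin 2))
    (hf : ∀ t x, f t x =
      (∑ i ∈ Finset.Icc 2 (N - 1), v (i - 1) t •
        ((Set.indicator (S (i - 1) t) (fun _ => (1 : ℝ)) x) •
            A (z (i - 1) t - z i t) -
         (Set.indicator (S (i + 1) t) (fun _ => (1 : ℝ)) x *
            (‖z (i - 1) t - z i t‖ ^ 2 / ‖z (i + 1) t - z i t‖ ^ 2)) •
            A (z (i + 1) t - z i t))) +
      (∑ i ∈ Finset.Icc 2 (N - 1), (Set.indicator (S i t) (fun _ => (1 : ℝ)) x *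
          v (i - 1) t) •
        (A (z i t - z (i - 1) t) -
          (‖z (i - 1) t - z i t‖ ^ 2 / ‖z (i + 1) t - z i t‖ ^ 2) •
            A (z i t - z (i + 1) t)))) :
    ∀ t ∈ Set.Icc (0 : ℝ) T, ∀ x,
      ‖f t x‖ ≤ 2 * (∑ i ∈ Finset.Icc 2 (N - 1), |v (i - 1) t|) * M := by
  intro t ht x
  have h2r : (0:ℝ) < 2 * r := by linarith
  have hAnorm : ∀ y : EuclideanSpace ℝ (Fin 2), ‖A y‖ = ‖y‖ := by
    intro y
    rw [EuclideanSpace.norm_eq, EuclideanSpace.norm_eq, hA]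
    congr 1
    simp [Fin.sum_univ_two]
    ring
  have hind : ∀ s : Set (EuclideanSpace ℝ (Fin 2)),
      0 ≤ Set.indicator s (fun _ => (1:ℝ)) x ∧ Set.indicator s (fun _ => (1:ℝ)) x ≤ 1 := by
    intro s
    by_cases h : x ∈ s <;> simp [Set.indicator_apply, h]
  -- per-index facts
  have key : ∀ i ∈ Finset.Icc 2 (N-1),
      ‖z (i-1) t - z i t‖ + ‖z (i-1) t - z i t‖^2 / ‖z (i+1) t - z i t‖ ≤ M ∧
      2 * r < ‖z (i+1) t - z i t‖ := by
    intro i hi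
    simp only [Finset.mem_Icc] at hi
    have hiN : i ∈ Finset.Icc 1 N := by simp only [Finset.mem_Icc]; omega
    have hi1N : i + 1 ∈ Finset.Icc 1 N := by simp only [Finset.mem_Icc]; omega
    have he : ‖z (i+1) t - z i t‖ > 2 * r := hfar t ht (i+1) hi1N i hiN (by omega)
    refine ⟨?_, he⟩
    have hMi := hM i (by simp only [Finset.mem_Icc]; omega) t ht
    rw [norm_sub_rev] at hMi
    have hde : ‖z (i-1) t - z i t‖^2 / ‖z (i+1) t - z i t‖ ≤
        ‖z (i-1) t - z i t‖^2 / (2*r) := by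
      gcongr
    linarith
  have hMnn : 0 ≤ M := by
    have h2 := (key 2 (by simp only [Finset.mem_Icc]; omega)).1
    have h2' := (key 2 (by simp only [Finset.mem_Icc]; omega)).2
    have hp : (0:ℝ) ≤ ‖z (2-1) t - z 2 t‖^2 / ‖z (2+1) t - z 2 t‖ :=
      div_nonneg (sq_nonneg _) (le_of_lt (h2r.trans h2'))
    have := norm_nonneg (z (2-1) t - z 2 t)
    linarith
  rw [hf]
  refine le_trans (norm_add_le _ _) ?_
  have hb1 : ‖∑ i ∈ Finset.Icc 2 (N - 1), v (i - 1) t •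
        ((Set.indicator (S (i - 1) t) (fun _ => (1 : ℝ)) x) •
            A (z (i - 1) t - z i t) -
         (Set.indicator (S (i + 1) t) (fun _ => (1 : ℝ)) x *
            (‖z (i - 1) t - z i t‖ ^ 2 / ‖z (i + 1) t - z i t‖ ^ 2)) •
            A (z (i + 1) t - z i t))‖ ≤
      ∑ i ∈ Finset.Icc 2 (N - 1), |v (i - 1) t| * M := by
    refine le_trans (norm_sum_le _ _) (Finset.sum_le_sum ?_)
    intro i hi
    obtain ⟨hkM, he⟩ := key i hi
    set d := ‖z (i-1) t - z i t‖ with hd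
    set e := ‖z (i+1) t - z i t‖ with heq
    have hepos : 0 < e := h2r.trans he
    obtain ⟨hχ1, hχ1'⟩ := hind (S (i-1) t)
    obtain ⟨hχ2, hχ2'⟩ := hind (S (i+1) t)
    set χ1 := Set.indicator (S (i-1) t) (fun _ => (1:ℝ)) x
    set χ2 := Set.indicator (S (i+1) t) (fun _ => (1:ℝ)) x
    rw [norm_smul, Real.norm_eq_abs]
    refine mul_le_mul_of_nonneg_left ?_ (abs_nonneg _)
    refine le_trans (norm_sub_le _ _) ?_
    rw [norm_smul, norm_smul, hAnorm, hAnorm, Real.norm_eq_abs, Real.norm_eq_abs,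
      abs_of_nonneg hχ1, abs_of_nonneg (mul_nonneg hχ2 (div_nonneg (sq_nonneg _)
        (sq_nonneg _)))]
    have hqe : χ2 * (d^2 / e^2) * e = χ2 * (d^2 / e) := by
      field_simp
    rw [hqe]
    have h1 : χ1 * d ≤ d := by nlinarith [norm_nonneg (z (i-1) t - z i t)]
    have h2 : χ2 * (d^2 / e) ≤ d^2 / e := by
      nlinarith [div_nonneg (sq_nonneg d) hepos.le]
    linarith
  have hb2 : ‖∑ i ∈ Finset.Icc 2 (N - 1), (Set.indicator (S i t) (fun _ => (1 : ℝ)) x *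
          v (i - 1) t) •
        (A (z i t - z (i - 1) t) -
          (‖z (i - 1) t - z i t‖ ^ 2 / ‖z (i + 1) t - z i t‖ ^ 2) •
            A (z i t - z (i + 1) t))‖ ≤
      ∑ i ∈ Finset.Icc 2 (N - 1), |v (i - 1) t| * M := by
    refine le_trans (norm_sum_le _ _) (Finset.sum_le_sum ?_)
    intro i hi
    obtain ⟨hkM, he⟩ := key i hi
    set d := ‖z (i-1) t - z i t‖ with hd
    have hd' : ‖z i t - z (i-1) t‖ = d := norm_sub_rev _ _
    set e := ‖z (i+1) t - z i t‖ with heq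
    have he' : ‖z i t - z (i+1) t‖ = e := norm_sub_rev _ _
    have hepos : 0 < e := h2r.trans he
    obtain ⟨hχ, hχ'⟩ := hind (S i t)
    set χ := Set.indicator (S i t) (fun _ => (1:ℝ)) x
    rw [norm_smul, Real.norm_eq_abs, abs_mul, abs_of_nonneg hχ]
    have hbody : ‖A (z i t - z (i - 1) t) -
        (d ^ 2 / e ^ 2) • A (z i t - z (i + 1) t)‖ ≤ M := by
      refine le_trans (norm_sub_le _ _) ?_
      rw [norm_smul, hAnorm, hAnorm, hd', he', Real.norm_eq_abs,
        abs_of_nonneg (div_nonneg (sq_nonneg _) (sq_nonneg _))]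
      have hqe : d^2 / e^2 * e = d^2 / e := by
        field_simp
      rw [hqe]
      exact hkM
    calc χ * |v (i-1) t| * ‖A (z i t - z (i - 1) t) -
          (d ^ 2 / e ^ 2) • A (z i t - z (i + 1) t)‖
        ≤ 1 * |v (i-1) t| * M := by
          gcongr
      _ = |v (i-1) t| * M := by ring
  calc _ ≤ (∑ i ∈ Finset.Icc 2 (N - 1), |v (i - 1) t| * M) +
        (∑ i ∈ Finset.Icc 2 (N - 1), |v (i - 1) t| * M) := add_le_add hb1 hb2
    _ = 2 * (∑ i ∈ Finset.Icc 2 (N - 1), |v (i - 1) t|) * M := by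
        rw [← Finset.sum_mul]
        ring
end
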